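/- For β ∈ (-1,1) and the skew Brownian motion density p_β(1,x,y), define H_g(x) = ∫_ℝ (|y| - |x|) · p_β(1,x,y) dy. Then ∫_ℝ H_g(x) · (1 + sgn(x)β) dx = 1. -/

import Mathlib

open MeasureTheory Set

/-- Transition density of the skew Brownian motion with parameter `β`. -/
noncomputable def skewDensity (β t x y : ℝ) : ℝ :=
  (1 / Real.sqrt (2 * Real.pi * t)) * Real.exp (-(x - y) ^ 2 / (2 * t))
    + β * Real.sign y * ((1 / Real.sqrt (2 * Real.pi * t)) * Real.exp (-(|x| + |y|) ^ 2 / (2 * t)))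

section Aux

open Filter

noncomputable def gg (u : ℝ) : ℝ := (1 / Real.sqrt (2 * Real.pi)) * Real.exp (-u ^ 2 / 2)

lemma gg_eq (u : ℝ) : gg u = (1 / Real.sqrt (2 * Real.pi)) * Real.exp (-(1/2 : ℝ) * u ^ 2) := by
  unfold gg; ring_nf

lemma gg_nonneg (u : ℝ) : 0 ≤ gg u := by
  unfold gg
  positivity

lemma gg_even (u : ℝ) : gg (-u) = gg u := by unfold gg; rw [neg_pow]; ring_nf

lemma gg_abs (u : ℝ) : gg |u| = gg u := by unfold gg; rw [sq_abs]

lemma gg_cont : Continuous gg := by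
  unfold gg
  fun_prop

lemma gg_int : Integrable gg := by
  have : gg = fun u => (1 / Real.sqrt (2 * Real.pi)) * Real.exp (-(1/2 : ℝ) * u ^ 2) :=
    funext gg_eq
  rw [this]
  exact (integrable_exp_neg_mul_sq (by norm_num : (0:ℝ) < 1/2)).const_mul _

lemma id_mul_gg_int : Integrable (fun u => u * gg u) := by
  simp_rw [gg_eq]
  have := (integrable_mul_exp_neg_mul_sq (by norm_num : (0:ℝ) < 1/2)).const_mul
    (1 / Real.sqrt (2 * Real.pi))
  apply this.congr
  filter_upwards with u
  ring

lemma abs_mul_gg_int : Integrable (fun u => |u| * gg u) := by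
  apply id_mul_gg_int.abs.congr
  filter_upwards with u
  rw [abs_mul, abs_of_nonneg (gg_nonneg u)]

lemma integral_gg : ∫ u, gg u = 1 := by
  simp_rw [gg_eq]
  rw [integral_const_mul, integral_gaussian]
  have h1 : Real.pi / (1/2 : ℝ) = 2 * Real.pi := by ring
  rw [h1]
  rw [one_div, inv_mul_eq_div, div_eq_one_iff_eq]
  positivity

lemma gg_hasDeriv (t : ℝ) : HasDerivAt gg (-t * gg t) t := by
  have h1 : HasDerivAt (fun u : ℝ => -u ^ 2 / 2) (-t) t := by
    have := ((hasDerivAt_pow 2 t).neg).div_const 2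
    refine this.congr_deriv ?_
    ring
  have h2 := (h1.exp).const_mul (1 / Real.sqrt (2 * Real.pi))
  have : gg = fun u => (1 / Real.sqrt (2 * Real.pi)) * Real.exp (-u ^ 2 / 2) := rfl
  rw [this]
  refine h2.congr_deriv ?_
  show _ = -t * ((1 / Real.sqrt (2 * Real.pi)) * Real.exp (-t ^ 2 / 2))
  ring

lemma neg_gg_hasDeriv (t : ℝ) : HasDerivAt (fun u => -gg u) (t * gg t) t := by
  have := (gg_hasDeriv t).neg
  refine this.congr_deriv ?_
  ring

lemma gg_tendsto : Tendsto gg atTop (nhds 0) := by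
  have h1 : Tendsto (fun u : ℝ => -u ^ 2 / 2) atTop atBot := by
    apply Tendsto.atBot_div_const (by norm_num : (0:ℝ) < 2)
    exact tendsto_neg_atBot_iff.mpr (tendsto_pow_atTop (by norm_num : 2 ≠ 0))
  have h2 : Tendsto (fun u : ℝ => Real.exp (-u ^ 2 / 2)) atTop (nhds 0) :=
    Real.tendsto_exp_atBot.comp h1
  have h3 := h2.const_mul (1 / Real.sqrt (2 * Real.pi))
  rw [mul_zero] at h3
  exact h3

lemma id_gg_tendsto : Tendsto (fun u => u * gg u) atTop (nhds 0) := by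
  have hb : Tendsto (fun u : ℝ => u ^ 1 * Real.exp (-u) * (1 / Real.sqrt (2 * Real.pi)))
      atTop (nhds 0) := by
    have := (Real.tendsto_pow_mul_exp_neg_atTop_nhds_zero 1).mul_const
      (1 / Real.sqrt (2 * Real.pi))
    rwa [zero_mul] at this
  apply tendsto_of_tendsto_of_tendsto_of_le_of_le' tendsto_const_nhds hb
  · filter_upwards [eventually_ge_atTop (0:ℝ)] with u hu
    exact mul_nonneg hu (gg_nonneg u)
  · filter_upwards [eventually_ge_atTop (2:ℝ)] with u hu
    have h0 : (0:ℝ) < u := by linarith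
    have h1 : Real.exp (-u ^ 2 / 2) ≤ Real.exp (-u) := by
      apply Real.exp_le_exp.mpr
      nlinarith
    unfold gg
    have hc : (0:ℝ) ≤ 1 / Real.sqrt (2 * Real.pi) := by positivity
    calc u * ((1 / Real.sqrt (2 * Real.pi)) * Real.exp (-u ^ 2 / 2))
        ≤ u * ((1 / Real.sqrt (2 * Real.pi)) * Real.exp (-u)) := by
          apply mul_le_mul_of_nonneg_left (mul_le_mul_of_nonneg_left h1 hc) h0.le
      _ = u ^ 1 * Real.exp (-u) * (1 / Real.sqrt (2 * Real.pi)) := by ring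

lemma integral_Ioi_id_mul_gg (a : ℝ) : ∫ t in Ioi a, t * gg t = gg a := by
  have h := integral_Ioi_of_hasDerivAt_of_tendsto
    (f := fun u => -gg u) (f' := fun t => t * gg t) (a := a) (m := 0)
    (gg_cont.neg.continuousWithinAt)
    (fun x _ => neg_gg_hasDeriv x)
    (id_mul_gg_int.integrableOn)
    (by simpa using gg_tendsto.neg)
  rw [h]; ring

noncomputable def Q (a : ℝ) : ℝ := ∫ t in Ioi a, gg t

lemma Q_nonneg (a : ℝ) : 0 ≤ Q a :=
  setIntegral_nonneg measurableSet_Ioi (fun t _ => gg_nonneg t)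

lemma Q_antitone : Antitone Q := by
  intro a b hab
  exact setIntegral_mono_set gg_int.integrableOn
    (Filter.Eventually.of_forall fun t => gg_nonneg t)
    (HasSubset.Subset.eventuallyLE (Ioi_subset_Ioi hab))

lemma Q_measurable : Measurable Q := Q_antitone.measurable

lemma mul_Q_le (a : ℝ) (ha : 0 ≤ a) : a * Q a ≤ gg a := by
  have h1 : a * Q a = ∫ t in Ioi a, a * gg t := by
    rw [integral_const_mul]; rfl
  rw [h1, ← integral_Ioi_id_mul_gg a]
  apply setIntegral_mono_on (gg_int.const_mul a).integrableOn
    id_mul_gg_int.integrableOn measurableSet_Ioi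
  intro t ht
  exact mul_le_mul_of_nonneg_right (le_of_lt ht) (gg_nonneg t)

lemma Q_hasDeriv (a : ℝ) : HasDerivAt Q (-gg a) a := by
  have key : ∀ b : ℝ, Q b = Q 0 - ∫ t in (0:ℝ)..b, gg t := by
    intro b
    have h1 : (∫ t in Iic b, gg t) - ∫ t in Iic 0, gg t = ∫ t in (0:ℝ)..b, gg t :=
      intervalIntegral.integral_Iic_sub_Iic gg_int.integrableOn gg_int.integrableOn
    have h2 : ∀ c : ℝ, (∫ t in Iic c, gg t) + Q c = ∫ t, gg t := fun c =>
      intervalIntegral.integral_Iic_add_Ioi (b := c) gg_int.integrableOn gg_int.integrableOn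
    have h3 := h2 b
    have h4 := h2 0
    linarith [h1]
  have hD : HasDerivAt (fun b => ∫ t in (0:ℝ)..b, gg t) (gg a) a :=
    intervalIntegral.integral_hasDerivAt_right
      (gg_int.intervalIntegrable)
      (gg_cont.stronglyMeasurableAtFilter _ _)
      (gg_cont.continuousAt)
  have : HasDerivAt (fun b => Q 0 - ∫ t in (0:ℝ)..b, gg t) (-gg a) a := by
    simpa using (hD.const_sub (Q 0))
  apply HasDerivAt.congr_of_eventuallyEq this
  filter_upwards with b
  exact key b

lemma integral_Ioi_gg : ∫ a in Ioi (0:ℝ), gg a = 1/2 := by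
  have h := integral_comp_abs (f := gg)
  simp_rw [gg_abs] at h
  rw [integral_gg] at h
  linarith

lemma Q_tendsto : Tendsto Q atTop (nhds 0) := by
  apply tendsto_of_tendsto_of_tendsto_of_le_of_le' tendsto_const_nhds gg_tendsto
  · exact Filter.Eventually.of_forall Q_nonneg
  · filter_upwards [eventually_ge_atTop (1:ℝ)] with a ha
    calc Q a = 1 * Q a := (one_mul _).symm
      _ ≤ a * Q a := mul_le_mul_of_nonneg_right ha (Q_nonneg a)
      _ ≤ gg a := mul_Q_le a (by linarith)

lemma G1_tendsto : Tendsto (fun a => a^2/2 * Q a - a/2 * gg a) atTop (nhds 0) := by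
  have hag : Tendsto (fun a => a * gg a) atTop (nhds 0) := id_gg_tendsto
  have h2 : Tendsto (fun a => a/2 * gg a) atTop (nhds 0) := by
    have := hag.div_const 2
    rw [zero_div] at this
    exact this.congr (fun a => by ring)
  have h1 : Tendsto (fun a => a^2/2 * Q a) atTop (nhds 0) := by
    apply tendsto_of_tendsto_of_tendsto_of_le_of_le' tendsto_const_nhds h2
    · filter_upwards [eventually_ge_atTop (0:ℝ)] with a ha
      exact mul_nonneg (by positivity) (Q_nonneg a)
    · filter_upwards [eventually_ge_atTop (0:ℝ)] with a ha
      calc a^2/2 * Q a = (a/2) * (a * Q a) := by ring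
        _ ≤ (a/2) * gg a := by
            apply mul_le_mul_of_nonneg_left (mul_Q_le a ha) (by linarith)
        _ = a/2 * gg a := rfl
  have := h1.sub h2
  rwa [sub_zero] at this

lemma G1_hasDeriv (a : ℝ) :
    HasDerivAt (fun a => a^2/2 * Q a - a/2 * gg a) (a * Q a - gg a / 2) a := by
  have h1 : HasDerivAt (fun a : ℝ => a^2/2 * Q a) (a * Q a + a^2/2 * (-gg a)) a := by
    have hp : HasDerivAt (fun a : ℝ => a^2/2) a a := by
      have := (hasDerivAt_pow 2 a).div_const 2
      refine this.congr_deriv ?_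
      ring
    exact hp.mul (Q_hasDeriv a)
  have h2 : HasDerivAt (fun a : ℝ => a/2 * gg a) ((1/2) * gg a + a/2 * (-a * gg a)) a := by
    have hp : HasDerivAt (fun a : ℝ => a/2) (1/2) a := (hasDerivAt_id a).div_const 2
    exact hp.mul (gg_hasDeriv a)
  have := h1.sub h2
  refine this.congr_deriv ?_
  ring

lemma mul_Q_meas : Measurable (fun a => a * Q a) :=
  measurable_id.mul Q_measurable

lemma integrand_int : IntegrableOn (fun a => a * Q a - gg a / 2) (Ioi (0:ℝ)) := by
  apply Integrable.mono' (g := fun a => gg a) gg_int.restrict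
    ((mul_Q_meas.sub (gg_cont.measurable.div_const 2)).aestronglyMeasurable)
  filter_upwards [ae_restrict_mem measurableSet_Ioi] with a ha
  have h0 : 0 ≤ a * Q a := mul_nonneg (le_of_lt ha) (Q_nonneg a)
  have h1 : a * Q a ≤ gg a := mul_Q_le a (le_of_lt ha)
  have h2 : 0 ≤ gg a := gg_nonneg a
  simp only [Pi.sub_apply, Real.norm_eq_abs, abs_le]
  constructor <;> linarith

lemma mul_Q_intOn : IntegrableOn (fun a => a * Q a) (Ioi (0:ℝ)) := by
  apply Integrable.mono' (g := fun a => gg a) gg_int.restrict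
    mul_Q_meas.aestronglyMeasurable
  filter_upwards [ae_restrict_mem measurableSet_Ioi] with a ha
  rw [Real.norm_eq_abs, abs_of_nonneg (mul_nonneg (le_of_lt ha) (Q_nonneg a))]
  exact mul_Q_le a (le_of_lt ha)

lemma integral_Ioi_mul_Q : ∫ a in Ioi (0:ℝ), a * Q a = 1/4 := by
  have hftc := integral_Ioi_of_hasDerivAt_of_tendsto
    (f := fun a => a^2/2 * Q a - a/2 * gg a) (f' := fun a => a * Q a - gg a / 2)
    (a := 0) (m := 0)
    (G1_hasDeriv 0).continuousAt.continuousWithinAt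
    (fun x _ => G1_hasDeriv x) integrand_int G1_tendsto
  norm_num at hftc
  have hadd := integral_add integrand_int (Integrable.restrict (gg_int.div_const 2))
  simp only [sub_add_cancel] at hadd
  rw [hadd, hftc, integral_div, integral_Ioi_gg]
  norm_num

lemma integral_Ioi_comp_add (f : ℝ → ℝ) (a : ℝ) :
    ∫ y in Ioi (0:ℝ), f (y + a) = ∫ t in Ioi a, f t := by
  rw [← integral_indicator measurableSet_Ioi, ← integral_indicator measurableSet_Ioi]
  have h : ∀ y : ℝ, indicator (Ioi (0:ℝ)) (fun y => f (y + a)) y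
      = indicator (Ioi a) f (y + a) := by
    intro y
    by_cases hy : y ∈ Ioi (0:ℝ)
    · rw [indicator_of_mem hy, indicator_of_mem (by simp only [mem_Ioi] at hy ⊢; linarith)]
    · rw [indicator_of_notMem hy,
        indicator_of_notMem (by simp only [mem_Ioi] at hy ⊢; linarith)]
  simp_rw [h]
  exact integral_add_right_eq_self (indicator (Ioi a) f) a

lemma gg_comp_add_int (a : ℝ) : Integrable (fun y : ℝ => gg (y + a)) := by
  simpa using gg_int.comp_sub_right (-a)

lemma id_gg_comp_add_int (a : ℝ) : Integrable (fun y : ℝ => (y + a) * gg (y + a)) := by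
  simpa using id_mul_gg_int.comp_sub_right (-a)

lemma integral_odd_zero (f : ℝ → ℝ) (hf : ∀ x, f (-x) = -f x) : ∫ x, f x = 0 := by
  have h1 : ∫ x, f (-x) = ∫ x, f x := integral_neg_eq_self f volume
  simp_rw [hf] at h1
  rw [integral_neg] at h1
  linarith

lemma integral_id_gg : ∫ u, u * gg u = 0 := by
  apply integral_odd_zero
  intro x
  rw [gg_even]
  ring

lemma gg_anti {u v : ℝ} (h : |u| ≤ |v|) : gg v ≤ gg u := by
  unfold gg
  apply mul_le_mul_of_nonneg_left _ (by positivity)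
  apply Real.exp_le_exp.mpr
  have h2 : u ^ 2 ≤ v ^ 2 := by
    rw [← sq_abs u, ← sq_abs v]
    exact pow_le_pow_left₀ (abs_nonneg u) h 2
  linarith

lemma sign_measurable : Measurable Real.sign := by
  unfold Real.sign
  refine Measurable.ite (measurableSet_lt measurable_id measurable_const) measurable_const ?_
  exact Measurable.ite (measurableSet_lt measurable_const measurable_id) measurable_const
    measurable_const

lemma abs_sign_le (y : ℝ) : |Real.sign y| ≤ 1 := by
  unfold Real.sign
  split_ifs <;> norm_num

lemma inner_integrable (x : ℝ) : Integrable (fun y => (|y| - |x|) * gg (x - y)) := by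
  have hc : Continuous (fun y : ℝ => (|y| - |x|) * gg (x - y)) := by
    apply Continuous.mul
    · exact continuous_abs.sub continuous_const
    · exact gg_cont.comp (continuous_const.sub continuous_id)
  apply Integrable.mono' (g := fun y => |y - x| * gg (y - x)) (abs_mul_gg_int.comp_sub_right x)
    hc.aestronglyMeasurable
  filter_upwards with y
  have hgg : gg (x - y) = gg (y - x) := by rw [← gg_even (y - x), neg_sub]
  rw [Real.norm_eq_abs, abs_mul, abs_of_nonneg (gg_nonneg _), hgg]
  exact mul_le_mul_of_nonneg_right (abs_abs_sub_abs_le_abs_sub y x) (gg_nonneg _)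

lemma skewpart_integrable (x : ℝ) :
    Integrable (fun y => Real.sign y * ((|y| - |x|) * gg (|x| + |y|))) := by
  have hmaj : Integrable (fun y : ℝ => |y| * gg y + |x| * gg y) :=
    abs_mul_gg_int.add (gg_int.const_mul |x|)
  have hm : Measurable (fun y => Real.sign y * ((|y| - |x|) * gg (|x| + |y|))) := by
    apply Measurable.mul sign_measurable
    apply Measurable.mul (measurable_abs.sub measurable_const)
    exact gg_cont.measurable.comp (measurable_const.add measurable_abs)
  apply Integrable.mono' hmaj hm.aestronglyMeasurable
  filter_upwards with y
  rw [Real.norm_eq_abs, abs_mul, abs_mul, abs_of_nonneg (gg_nonneg _)]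
  have h1 : |Real.sign y| ≤ 1 := abs_sign_le y
  have h2 : |(|y| - |x|)| ≤ |y| + |x| := by
    rw [abs_le]
    constructor <;> [linarith [abs_nonneg y, abs_nonneg x]; linarith [abs_nonneg x]]
  have h3 : gg (|x| + |y|) ≤ gg y := by
    apply gg_anti
    rw [abs_of_nonneg (by positivity : (0:ℝ) ≤ |x| + |y|)]
    linarith [abs_nonneg x, abs_abs y]
  have h4 : (0:ℝ) ≤ gg (|x| + |y|) := gg_nonneg _
  have h5 : (0:ℝ) ≤ gg y := gg_nonneg _
  calc |Real.sign y| * (|(|y| - |x|)| * gg (|x| + |y|))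
      ≤ 1 * (|(|y| - |x|)| * gg (|x| + |y|)) := by
        apply mul_le_mul_of_nonneg_right h1 (by positivity)
    _ = |(|y| - |x|)| * gg (|x| + |y|) := one_mul _
    _ ≤ (|y| + |x|) * gg y := by
        apply mul_le_mul h2 h3 h4 (by positivity)
    _ = |y| * gg y + |x| * gg y := by ring

lemma skewpart_zero (x : ℝ) :
    ∫ y, Real.sign y * ((|y| - |x|) * gg (|x| + |y|)) = 0 := by
  apply integral_odd_zero
  intro y
  rw [Real.sign_neg, abs_neg]
  ring

lemma F_formula_nonneg (a : ℝ) (ha : 0 ≤ a) :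
    ∫ y, (|y| - a) * gg (a - y) = 2 * (gg a - a * Q a) := by
  have hgg : ∀ y : ℝ, gg (a - y) = gg (y - a) := fun y => by
    rw [← gg_even (y - a), neg_sub]
  have h_int1 : Integrable (fun y => (y - a) * gg (y - a)) := id_mul_gg_int.comp_sub_right a
  have h_int2 : Integrable (fun y => (|y| - y) * gg (y - a)) := by
    have hmaj : Integrable (fun y : ℝ => 2 * (|y - a| * gg (y - a)) + (2 * |a|) * gg (y - a)) :=
      ((abs_mul_gg_int.comp_sub_right a).const_mul 2).add ((gg_int.comp_sub_right a).const_mul _)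
    have hm : Continuous (fun y : ℝ => (|y| - y) * gg (y - a)) := by
      apply Continuous.mul (continuous_abs.sub continuous_id)
      exact gg_cont.comp (continuous_id.sub continuous_const)
    apply Integrable.mono' hmaj hm.aestronglyMeasurable
    filter_upwards with y
    rw [Real.norm_eq_abs, abs_mul, abs_of_nonneg (gg_nonneg _)]
    have h1 : |(|y| - y)| ≤ 2 * |y| := by
      rw [abs_le]
      constructor <;> [linarith [le_abs_self y, abs_nonneg y]; linarith [neg_abs_le y]]
    have h2 : |y| ≤ |y - a| + |a| := by
      calc |y| = |(y - a) + a| := by ring_nf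
        _ ≤ |y - a| + |a| := abs_add_le _ _
    nlinarith [gg_nonneg (y - a), abs_nonneg (|y| - y)]
  calc ∫ y, (|y| - a) * gg (a - y)
      = ∫ y, ((y - a) * gg (y - a) + (|y| - y) * gg (y - a)) := by
        congr 1; funext y; rw [hgg]; ring
    _ = (∫ y, (y - a) * gg (y - a)) + ∫ y, (|y| - y) * gg (y - a) :=
        integral_add h_int1 h_int2
    _ = 0 + ∫ y, (|y| - y) * gg (y - a) := by
        rw [integral_sub_right_eq_self (fun u => u * gg u) a, integral_id_gg]
    _ = ∫ y, (|y| - y) * gg (y - a) := by ring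
    _ = (∫ y in Iio (0:ℝ), (|y| - y) * gg (y - a))
          + ∫ y in Ici (0:ℝ), (|y| - y) * gg (y - a) :=
        (intervalIntegral.integral_Iio_add_Ici h_int2.integrableOn h_int2.integrableOn).symm
    _ = ∫ y in Iio (0:ℝ), (|y| - y) * gg (y - a) := by
        have hz : ∫ y in Ici (0:ℝ), (|y| - y) * gg (y - a) = 0 := by
          rw [setIntegral_congr_fun (g := fun _ => (0:ℝ)) measurableSet_Ici
            (fun y (hy : 0 ≤ y) => by rw [abs_of_nonneg hy]; ring)]
          simp
        rw [hz, add_zero]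
    _ = ∫ y in Iic (0:ℝ), (|y| - y) * gg (y - a) := integral_Iic_eq_integral_Iio.symm
    _ = ∫ y in Ioi (0:ℝ), (2 * ((y + a) * gg (y + a)) - (2 * a) * gg (y + a)) := by
        have hneg := integral_comp_neg_Ioi (0:ℝ) (fun z => (|z| - z) * gg (z - a))
        rw [neg_zero] at hneg
        rw [← hneg]
        apply setIntegral_congr_fun measurableSet_Ioi
        intro y hy
        have hy' : (0:ℝ) < y := hy
        show (|(-y)| - -y) * gg (-y - a) = _
        have e1 : gg (-y - a) = gg (y + a) := by
          rw [show -y - a = -(y + a) by ring, gg_even]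
        rw [abs_neg, abs_of_nonneg hy'.le, e1]
        ring
    _ = 2 * (∫ y in Ioi (0:ℝ), (y + a) * gg (y + a))
          - (2 * a) * ∫ y in Ioi (0:ℝ), gg (y + a) := by
        rw [integral_sub ((id_gg_comp_add_int a).integrableOn.const_mul 2)
          ((gg_comp_add_int a).integrableOn.const_mul _), integral_const_mul,
          integral_const_mul]
    _ = 2 * (gg a - a * Q a) := by
        rw [integral_Ioi_comp_add (fun t => t * gg t) a, integral_Ioi_comp_add gg a,
          integral_Ioi_id_mul_gg]
        show 2 * gg a - 2 * a * Q a = _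
        ring

lemma F_formula (x : ℝ) : ∫ y, (|y| - |x|) * gg (x - y) = 2 * (gg x - |x| * Q |x|) := by
  rcases le_or_gt 0 x with hx | hx
  · rw [abs_of_nonneg hx]
    exact F_formula_nonneg x hx
  · have ha : |x| = -x := abs_of_neg hx
    have h1 : ∫ y, (|y| - |x|) * gg (x - y) = ∫ y, (|y| - |x|) * gg (-x - y) := by
      rw [← integral_neg_eq_self (fun y => (|y| - |x|) * gg (x - y)) volume]
      congr 1
      funext y
      rw [abs_neg, show x - -y = -(-x - y) by ring, gg_even]
    rw [h1, ha, ← gg_even x]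
    exact F_formula_nonneg (-x) (by linarith)

lemma inner_eq (β x : ℝ) :
    ∫ y, (|y| - |x|) * skewDensity β 1 x y = 2 * (gg x - |x| * Q |x|) := by
  have hsd : ∀ y, skewDensity β 1 x y = gg (x - y) + β * Real.sign y * gg (|x| + |y|) := by
    intro y
    unfold skewDensity gg
    norm_num
  calc ∫ y, (|y| - |x|) * skewDensity β 1 x y
      = ∫ y, ((|y| - |x|) * gg (x - y)
          + β * (Real.sign y * ((|y| - |x|) * gg (|x| + |y|)))) := by
        congr 1; funext y; rw [hsd]; ring
    _ = (∫ y, (|y| - |x|) * gg (x - y))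
          + β * ∫ y, Real.sign y * ((|y| - |x|) * gg (|x| + |y|)) := by
        rw [integral_add (inner_integrable x) ((skewpart_integrable x).const_mul β),
          integral_const_mul]
    _ = 2 * (gg x - |x| * Q |x|) := by rw [F_formula, skewpart_zero]; ring

noncomputable def FF (x : ℝ) : ℝ := 2 * (gg x - |x| * Q |x|)

lemma absQ_int : Integrable (fun x => |x| * Q |x|) := by
  have hm : Measurable (fun x => |x| * Q |x|) :=
    measurable_abs.mul (Q_measurable.comp measurable_abs)
  apply Integrable.mono' gg_int hm.aestronglyMeasurable
  filter_upwards with x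
  rw [Real.norm_eq_abs, abs_of_nonneg (mul_nonneg (abs_nonneg x) (Q_nonneg |x|))]
  calc |x| * Q |x| ≤ gg |x| := mul_Q_le |x| (abs_nonneg x)
    _ = gg x := gg_abs x

lemma FF_int : Integrable FF := ((gg_int.sub absQ_int).const_mul 2).congr
  (Filter.Eventually.of_forall fun x => by simp only [Pi.sub_apply]; unfold FF; ring)

lemma FF_meas : Measurable FF := by
  apply Measurable.const_mul
  exact gg_cont.measurable.sub (measurable_abs.mul (Q_measurable.comp measurable_abs))

lemma FF_even (x : ℝ) : FF (-x) = FF x := by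
  unfold FF
  rw [gg_even, abs_neg]

lemma FFsign_int : Integrable (fun x => FF x * Real.sign x) := by
  apply Integrable.mono' FF_int.abs (FF_meas.mul sign_measurable).aestronglyMeasurable
  filter_upwards with x
  rw [Real.norm_eq_abs, Pi.mul_apply, abs_mul]
  calc |FF x| * |Real.sign x| ≤ |FF x| * 1 :=
        mul_le_mul_of_nonneg_left (abs_sign_le x) (abs_nonneg _)
    _ = |FF x| := mul_one _

lemma FFsign_zero : ∫ x, FF x * Real.sign x = 0 := by
  apply integral_odd_zero
  intro x
  rw [FF_even, Real.sign_neg]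
  ring

lemma integral_FF : ∫ x, FF x = 1 := by
  have h1 : ∫ x, |x| * Q |x| = 1/2 := by
    have h := integral_comp_abs (f := fun t => t * Q t)
    rw [h, integral_Ioi_mul_Q]
    norm_num
  have h2 : ∫ x, FF x = 2 * ((∫ x, gg x) - ∫ x, |x| * Q |x|) := by
    rw [← integral_sub gg_int absQ_int, ← integral_const_mul]
    congr 1
  rw [h2, integral_gg, h1]
  norm_num


end Aux

/-- For `β ∈ (-1,1)`, with `H_g(x) = ∫_ℝ (|y| - |x|) p_β(1,x,y) dy`, one has
`∫_ℝ H_g(x) (1 + sgn(x)β) dx = 1`. -/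
theorem integral_Hg_stationary (β : ℝ) (hβ : β ∈ Set.Ioo (-1 : ℝ) 1) :
    (∫ x : ℝ, (∫ y : ℝ, (|y| - |x|) * skewDensity β 1 x y) * (1 + Real.sign x * β)) = 1 := by
  calc ∫ x : ℝ, (∫ y : ℝ, (|y| - |x|) * skewDensity β 1 x y) * (1 + Real.sign x * β)
      = ∫ x, (FF x + β * (FF x * Real.sign x)) := by
        congr 1; funext x; rw [inner_eq β x]
        unfold FF
        ring
    _ = (∫ x, FF x) + β * ∫ x, FF x * Real.sign x := by
        rw [integral_add FF_int (FFsign_int.const_mul β), integral_const_mul]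
    _ = 1 := by rw [integral_FF, FFsign_zero]; ring
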